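/- Let A be a complex unital Banach algebra and a = (a₁,...,a_k), b = (b₁,...,b_k) two k-tuples of elements of A. Let R_{a,b} be the elementary operator x ↦ Σᵢ aᵢxbᵢ on A. Then for every unitary u ∈ A (invertible with ||u|| = ||u⁻¹|| = 1), the numerical range V(Σᵢ u⁻¹aᵢubᵢ, A) is contained in the numerical range V(R_{a,b}, B(A)) of R_{a,b} as an element of the Banach algebra of bounded operators on A. -/

import Mathlib

/-- Algebra numerical range of an element of a complex unital Banach algebra,
defined via states: `V(a) = {f a : f ∈ A*, ‖f‖ = 1 = f 1}`. -/
def numRange (A : Type*) [NormedRing A] [NormedAlgebra ℂ A] (a : A) : Set ℂ :=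
  {z | ∃ f : A →L[ℂ] ℂ, ‖f‖ = 1 ∧ f 1 = 1 ∧ f a = z}

theorem stmt3 (A : Type*) [NormedRing A] [NormedAlgebra ℂ A] [CompleteSpace A]
    [NormOneClass A] (k : ℕ) (a b : Fin k → A) (R : A →L[ℂ] A)
    (hR : ∀ x, R x = ∑ i, a i * x * b i)
    (u : Aˣ) (hu : ‖(u : A)‖ = 1) (hu' : ‖((u⁻¹ : Aˣ) : A)‖ = 1) :
    numRange A (∑ i, ((u⁻¹ : Aˣ) : A) * a i * u * b i)
      ⊆ numRange (A →L[ℂ] A) R := by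
  rintro z ⟨f, hf1, hf2, hf3⟩
  have ev : (A →L[ℂ] A) →L[ℂ] A := ContinuousLinearMap.apply ℂ A (u : A)
  set G : (A →L[ℂ] A) →L[ℂ] A :=
    (ContinuousLinearMap.mul ℂ A ((u⁻¹ : Aˣ) : A)).comp
      (ContinuousLinearMap.apply ℂ A (u : A)) with hG
  set F : (A →L[ℂ] A) →L[ℂ] ℂ := f.comp G with hF
  have hFapp : ∀ T : A →L[ℂ] A, F T = f (((u⁻¹ : Aˣ) : A) * T (u : A)) := by
    intro T
    simp [hF, hG, ContinuousLinearMap.apply]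
  have hF1 : F 1 = 1 := by
    rw [hFapp]
    simp only [ContinuousLinearMap.one_apply]
    rw [Units.inv_mul, hf2]
  have hFle : ‖F‖ ≤ 1 := by
    refine ContinuousLinearMap.opNorm_le_bound _ zero_le_one fun T => ?_
    rw [hFapp]
    calc ‖f (((u⁻¹ : Aˣ) : A) * T (u : A))‖
        ≤ ‖f‖ * ‖((u⁻¹ : Aˣ) : A) * T (u : A)‖ := f.le_opNorm _
      _ ≤ 1 * (‖((u⁻¹ : Aˣ) : A)‖ * ‖T (u : A)‖) := by
          rw [hf1]; exact mul_le_mul_of_nonneg_left (norm_mul_le _ _) zero_le_one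
      _ ≤ 1 * (1 * (‖T‖ * ‖(u : A)‖)) := by
          simp only [hu', one_mul]
          exact T.le_opNorm (u : A)
      _ = 1 * ‖T‖ := by rw [hu]; ring
  have hFnorm : ‖F‖ = 1 := by
    refine le_antisymm hFle ?_
    have h1 : ‖(1 : A →L[ℂ] A)‖ = 1 := by
      rw [ContinuousLinearMap.one_def]
      haveI : Nontrivial A := NormOneClass.nontrivial
      exact ContinuousLinearMap.norm_id
    have := F.le_opNorm (1 : A →L[ℂ] A)
    rw [hF1, h1, mul_one, norm_one] at this
    exact this
  refine ⟨F, hFnorm, hF1, ?_⟩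
  rw [hFapp, hR, Finset.mul_sum, ← hf3]
  congr 1
  apply Finset.sum_congr rfl
  intro i _
  rw [← mul_assoc, ← mul_assoc]
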